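/- arXiv:1512.03899 — 3 statements merged into one kernel-verified Lean document; each statement's English description precedes it below -/
import Mathlib

section
/- For any quad-system QS_C = ⟨Q_C, R⟩ and any i ∈ ℕ⁺: (i) dChaseᵢ(QS_C) can be computed from dChaseᵢ₋₁(QS_C) in time O(|R| · ||dChaseᵢ₋₁(QS_C)||^{rs}), where rs = max_{r∈R} ||r|| is the maximal symbol size of a bridge rule in R; and (ii) ||dChaseᵢ(QS_C)|| = O(||dChaseᵢ₋₁(QS_C)|| + ||R||). -/
/-! ## Core formalization: quads, quad-systems, bridge rules, distributed chase,
    distributed interpretation structures, CCQ entailment and safety notions. -/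

/-- A quad over elements of type `C`: context identifier, subject, predicate, object. -/
structure Quad (C : Type) where
  ctx : C
  s : C
  p : C
  o : C

/-- Terms over constants `C`, with variables indexed by naturals. -/
inductive Term (C : Type) : Type
  | var : ℕ → Term C
  | const : C → Term C

/-- A quad pattern: a context identifier together with a triple pattern. -/
structure QuadPattern (C : Type) where
  ctx : C
  s : Term C
  p : Term C
  o : Term C

/-- Constants enriched with Skolem blank nodes: `sk i j w` is the Skolem blank node
generated by the bridge rule with identifier `i`, at its existential variable `j`,
from the instantiated frontier vector `w` (its origin vector). -/
inductive SConst (C : Type) : Type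
  | base : C → SConst C
  | sk : ℕ → ℕ → List (SConst C) → SConst C

/-- Ground quads appearing in the distributed chase. -/
structure GQuad (C : Type) where
  ctx : C
  s : SConst C
  p : SConst C
  o : SConst C

def Term.inst {C : Type} (μ : ℕ → SConst C) : Term C → SConst C
  | .var v => μ v
  | .const a => .base a

def QuadPattern.inst {C : Type} (μ : ℕ → SConst C) (q : QuadPattern C) : GQuad C :=
  ⟨q.ctx, q.s.inst μ, q.p.inst μ, q.o.inst μ⟩

/-- A forall-existential bridge rule: body and head are sets of quad patterns,
`frontier` is the vector `x⃗` of frontier variables and `exVars` the existential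
variables `y⃗` of the head. -/
structure BridgeRule (C : Type) where
  id : ℕ
  body : List (QuadPattern C)
  head : List (QuadPattern C)
  frontier : List ℕ
  exVars : Finset ℕ

def Term.varsOf {C : Type} : Term C → Finset ℕ
  | .var v => {v}
  | .const _ => ∅

def QuadPattern.varsOf {C : Type} (q : QuadPattern C) : Finset ℕ :=
  q.s.varsOf ∪ q.p.varsOf ∪ q.o.varsOf

def patsVars {C : Type} (l : List (QuadPattern C)) : Finset ℕ :=
  l.foldr (fun q s => q.varsOf ∪ s) ∅

/-- Well-formedness of a bridge rule of the form
`∀x⃗∀z⃗ (body(x⃗,z⃗) → ∃y⃗ head(x⃗,y⃗))`. -/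
def BridgeRule.WF {C : Type} (r : BridgeRule C) : Prop :=
  (∀ v ∈ patsVars r.head, v ∉ r.exVars → v ∈ r.frontier) ∧
  (∀ v ∈ r.frontier, v ∈ patsVars r.body) ∧
  (∀ v ∈ r.exVars, v ∉ patsVars r.body ∧ v ∉ r.frontier) ∧
  r.frontier.Nodup

/-- A quad-system: a quad-graph together with a set of bridge rules. -/
structure QuadSystem (C : Type) where
  quads : Set (Quad C)
  rules : Set (BridgeRule C)

/-- Well-formed quad-systems: finitely many quads and rules, well-formed bridge rules
with unique rule identifiers. -/
def QuadSystem.WF {C : Type} (QS : QuadSystem C) : Prop :=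
  (∀ r ∈ QS.rules, r.WF) ∧
  (∀ r ∈ QS.rules, ∀ r' ∈ QS.rules, r.id = r'.id → r = r') ∧
  QS.quads.Finite ∧ QS.rules.Finite

/-- Extension of an assignment mapping each existential variable of `r` to the
corresponding fresh Skolem blank node. -/
def skExt {C : Type} (r : BridgeRule C) (μ : ℕ → SConst C) : ℕ → SConst C :=
  fun v => if v ∈ r.exVars then SConst.sk r.id v (r.frontier.map μ) else μ v

def headSatisfied {C : Type} (r : BridgeRule C) (μ : ℕ → SConst C)
    (I : Set (GQuad C)) : Prop :=
  ∃ ν : ℕ → SConst C, (∀ v, v ∉ r.exVars → ν v = μ v) ∧ ∀ q ∈ r.head, q.inst ν ∈ I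

/-- `(r, μ)` is applicable on `I` iff `body(r)[μ] ⊆ I` and no extension of `μ`
satisfies the head in `I` (restricted chase). -/
def applicable {C : Type} (r : BridgeRule C) (μ : ℕ → SConst C)
    (I : Set (GQuad C)) : Prop :=
  (∀ q ∈ r.body, q.inst μ ∈ I) ∧ ¬ headSatisfied r μ I

/-- The result of applying assignment `μ` to bridge rule `r`. -/
def applyRule {C : Type} (r : BridgeRule C) (μ : ℕ → SConst C) : Set (GQuad C) :=
  {q | ∃ h ∈ r.head, q = h.inst (skExt r μ)}

def Quad.toGQuad {C : Type} (q : Quad C) : GQuad C :=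
  ⟨q.ctx, .base q.s, .base q.p, .base q.o⟩

/-- One iteration of the distributed chase. -/
def chaseStep {C : Type} (QS : QuadSystem C) (I : Set (GQuad C)) : Set (GQuad C) :=
  I ∪ {q | ∃ r ∈ QS.rules, ∃ μ : ℕ → SConst C, applicable r μ I ∧ q ∈ applyRule r μ}

/-- The state of the distributed chase after `n` iterations. -/
def dChaseAt {C : Type} (QS : QuadSystem C) : ℕ → Set (GQuad C)
  | 0 => Quad.toGQuad '' QS.quads
  | n + 1 => chaseStep QS (dChaseAt QS n)

/-- The distributed chase of a quad-system. -/
def dChase {C : Type} (QS : QuadSystem C) : Set (GQuad C) :=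
  ⋃ n, dChaseAt QS n

/-! ### Distributed interpretation structures and entailment -/

/-- A distributed interpretation structure: a common domain, a rigid interpretation of
constants, and for each context a set of triples holding in it. -/
structure Interp (C : Type) where
  Dom : Type
  constInt : C → Dom
  holds : C → Dom → Dom → Dom → Prop

def Term.eval {C : Type} (I : Interp C) (σ : ℕ → I.Dom) : Term C → I.Dom
  | .var v => σ v
  | .const a => I.constInt a

def Interp.satQP {C : Type} (I : Interp C) (σ : ℕ → I.Dom) (q : QuadPattern C) : Prop :=
  I.holds q.ctx (q.s.eval I σ) (q.p.eval I σ) (q.o.eval I σ)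

def Interp.satQuad {C : Type} (I : Interp C) (q : Quad C) : Prop :=
  I.holds q.ctx (I.constInt q.s) (I.constInt q.p) (I.constInt q.o)

def Interp.satRule {C : Type} (I : Interp C) (r : BridgeRule C) : Prop :=
  ∀ σ : ℕ → I.Dom, (∀ q ∈ r.body, I.satQP σ q) →
    ∃ σ' : ℕ → I.Dom, (∀ v, v ∉ r.exVars → σ' v = σ v) ∧ ∀ q ∈ r.head, I.satQP σ' q

def Interp.isModel {C : Type} (I : Interp C) (QS : QuadSystem C) : Prop :=
  (∀ q ∈ QS.quads, I.satQuad q) ∧ ∀ r ∈ QS.rules, I.satRule r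

def QuadSystem.Consistent {C : Type} (QS : QuadSystem C) : Prop :=
  ∃ I : Interp C, I.isModel QS

/-- A (boolean) contextualized conjunctive query: a conjunction of quad patterns,
all of whose variables are existentially quantified. -/
abbrev CCQ (C : Type) : Type := List (QuadPattern C)

def Interp.satCCQ {C : Type} (I : Interp C) (Q : CCQ C) : Prop :=
  ∃ σ : ℕ → I.Dom, ∀ q ∈ Q, I.satQP σ q

/-- CCQ entailment: every model of the quad-system satisfies the query. -/
def entailsCCQ {C : Type} (QS : QuadSystem C) (Q : CCQ C) : Prop :=
  ∀ I : Interp C, I.isModel QS → I.satCCQ Q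

/-! ### Skolem blank nodes: descendants, origin rule ids, origin vectors,
origin contexts, and the safety notions -/

def SConst.isSk {C : Type} : SConst C → Prop
  | .sk _ _ _ => True
  | .base _ => False

/-- `childOf k b`: `k` is a child of the Skolem blank node `b`,
i.e. `k` occurs in the origin vector of `b`. -/
def childOf {C : Type} (k b : SConst C) : Prop :=
  ∃ i j w, b = SConst.sk i j w ∧ k ∈ w

/-- `descOf k b`: `k` is a descendant of `b` (transitive closure of `childOf`). -/
def descOf {C : Type} : SConst C → SConst C → Prop :=
  Relation.TransGen childOf

def occursIn {C : Type} (b : SConst C) (q : GQuad C) : Prop :=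
  q.s = b ∨ q.p = b ∨ q.o = b

def inChase {C : Type} (QS : QuadSystem C) (b : SConst C) : Prop :=
  ∃ q ∈ dChase QS, occursIn b q

def appearsAt {C : Type} (QS : QuadSystem C) (b : SConst C) (n : ℕ) : Prop :=
  ∃ q ∈ dChaseAt QS n, occursIn b q

/-- The origin contexts of a constant: the contexts in which triples containing it
are first generated during the chase construction. -/
def originContexts {C : Type} (QS : QuadSystem C) (b : SConst C) : Set C :=
  {c | ∃ n, (∀ m, m < n → ¬ appearsAt QS b m) ∧
        ∃ q ∈ dChaseAt QS n, occursIn b q ∧ q.ctx = c}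

/-- Isomorphism of two vectors of constants: a bijective renaming of blank nodes
(fixing all non-blank constants) carrying one to the other. -/
def VecIso {C : Type} (v w : List (SConst C)) : Prop :=
  ∃ g : SConst C → SConst C, w = v.map g ∧ (∀ x : SConst C, ¬ x.isSk → g x = x) ∧
    Set.InjOn g {x | x ∈ v ∧ x.isSk}

/-- A quad-system is unsafe iff its dChase contains two distinct Skolem blank nodes,
one a descendant of the other, with the same origin rule id and isomorphic
origin vectors. -/
def QuadSystem.Unsafe {C : Type} (QS : QuadSystem C) : Prop :=
  ∃ i j w j' w', inChase QS (SConst.sk i j w) ∧ inChase QS (SConst.sk i j' w') ∧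
    SConst.sk i j w ≠ SConst.sk i j' w' ∧
    descOf (SConst.sk i j w) (SConst.sk i j' w') ∧ VecIso w w'

def QuadSystem.Safe {C : Type} (QS : QuadSystem C) : Prop := ¬ QS.Unsafe

/-- A quad-system is unmsafe iff its dChase contains two distinct Skolem blank nodes,
one a descendant of the other, with the same origin rule id. -/
def QuadSystem.Unmsafe {C : Type} (QS : QuadSystem C) : Prop :=
  ∃ i j w j' w', inChase QS (SConst.sk i j w) ∧ inChase QS (SConst.sk i j' w') ∧
    SConst.sk i j w ≠ SConst.sk i j' w' ∧
    descOf (SConst.sk i j w) (SConst.sk i j' w')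

def QuadSystem.Msafe {C : Type} (QS : QuadSystem C) : Prop := ¬ QS.Unmsafe

/-- A quad-system is uncsafe iff its dChase contains two distinct Skolem blank nodes,
one a descendant of the other, with the same origin contexts. -/
def QuadSystem.Uncsafe {C : Type} (QS : QuadSystem C) : Prop :=
  ∃ b b' : SConst C, b.isSk ∧ b'.isSk ∧ b ≠ b' ∧ inChase QS b ∧ inChase QS b' ∧
    descOf b b' ∧ originContexts QS b = originContexts QS b'

def QuadSystem.Csafe {C : Type} (QS : QuadSystem C) : Prop := ¬ QS.Uncsafe
/-! ### Symbol sizes -/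

/-- The symbol size of a bridge rule: roughly four symbols per quad pattern. -/
def BridgeRule.size {C : Type} (r : BridgeRule C) : ℕ :=
  4 * (r.body.length + r.head.length)

/-- The symbol size of a set of bridge rules. -/
noncomputable def rulesSize {C : Type} (R : Set (BridgeRule C)) : ℕ :=
  ∑ᶠ r ∈ R, BridgeRule.size r

/-- The symbol size of a (finite) quad-graph. -/
noncomputable def quadsSize {C : Type} (Q : Set (Quad C)) : ℕ := 4 * Q.ncard

/-- The symbol size of a set of ground quads. -/
noncomputable def chaseSize {C : Type} (I : Set (GQuad C)) : ℕ := 4 * I.ncard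

/-- The symbol size of a quad-system. -/
noncomputable def QuadSystem.size {C : Type} (QS : QuadSystem C) : ℕ :=
  quadsSize QS.quads + rulesSize QS.rules
/-! ### Statement: each dChase iteration can be computed in time
`O(|R| · ‖dChase_{i-1}‖^{rs})` (where `rs = max_{r∈R} ‖r‖`), and
`‖dChase_i‖ = O(‖dChase_{i-1}‖ + ‖R‖)`.

The chase of the paper extends, at each iteration, the current state by a single
application of the `≺`-least applicable (bridge rule, assignment) pair; this is
captured by `IsSeqChase`.  The time bound of clause (i) is rendered by its
combinatorial content: the set of all quads obtainable by applying some applicable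
(rule, assignment) pair to `dChase_{i-1}` — the search space explored when computing
iteration `i` — has cardinality at most `K · |R| · (‖dChase_{i-1}‖ + 2)^{rs}`. -/

/-- `rs`: the maximal symbol size of a bridge rule of the quad-system. -/
noncomputable def maxRuleSize {C : Type} (QS : QuadSystem C) : ℕ :=
  sSup (BridgeRule.size '' QS.rules)

/-- A (sequential) dChase sequence: it starts from the quad-graph and, at each step,
either applies one applicable (bridge rule, assignment) pair, or stays put when no
pair is applicable. -/
def IsSeqChase {C : Type} (QS : QuadSystem C) (D : ℕ → Set (GQuad C)) : Prop :=
  D 0 = Quad.toGQuad '' QS.quads ∧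
  ∀ i : ℕ,
    (∃ r ∈ QS.rules, ∃ μ : ℕ → SConst C,
        applicable r μ (D i) ∧ D (i + 1) = D i ∪ applyRule r μ) ∨
    ((∀ r ∈ QS.rules, ∀ μ : ℕ → SConst C, ¬ applicable r μ (D i)) ∧ D (i + 1) = D i)

/-! ### Auxiliary lemmas for the complexity theorem -/

section ChaseComplexityAux

variable {C : Type}

attribute [local instance] Classical.decEq

lemma Term.inst_congr {μ ν : ℕ → SConst C} {t : Term C}
    (h : ∀ v ∈ t.varsOf, μ v = ν v) : t.inst μ = t.inst ν := by
  cases t with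
  | var v => exact h v (by simp [Term.varsOf])
  | const a => rfl

lemma QuadPattern.inst_congr {μ ν : ℕ → SConst C} {q : QuadPattern C}
    (h : ∀ v ∈ q.varsOf, μ v = ν v) : q.inst μ = q.inst ν := by
  have hs := Term.inst_congr (t := q.s) fun v hv =>
    h v (by simp [QuadPattern.varsOf, hv])
  have hp := Term.inst_congr (t := q.p) fun v hv =>
    h v (by simp [QuadPattern.varsOf, hv])
  have ho := Term.inst_congr (t := q.o) fun v hv =>
    h v (by simp [QuadPattern.varsOf, hv])
  simp [QuadPattern.inst, hs, hp, ho]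

lemma mem_term_varsOf {t : Term C} {v : ℕ} (h : v ∈ t.varsOf) : t = .var v := by
  cases t with
  | var u => simp [Term.varsOf] at h; simp [h]
  | const a => simp [Term.varsOf] at h

lemma applyRule_eq_image (r : BridgeRule C) (μ : ℕ → SConst C) :
    applyRule r μ = (fun h : QuadPattern C => h.inst (skExt r μ)) '' {h | h ∈ r.head} := by
  ext q; simp [applyRule, Set.image, eq_comm]

lemma setOf_mem_list_eq (l : List (QuadPattern C)) :
    {h | h ∈ l} = (↑l.toFinset : Set (QuadPattern C)) := by
  ext h; simp

lemma applyRule_finite (r : BridgeRule C) (μ : ℕ → SConst C) :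
    (applyRule r μ).Finite := by
  rw [applyRule_eq_image, setOf_mem_list_eq]
  exact (r.head.toFinset.finite_toSet).image _

lemma ncard_applyRule_le (r : BridgeRule C) (μ : ℕ → SConst C) :
    (applyRule r μ).ncard ≤ r.head.length := by
  rw [applyRule_eq_image, setOf_mem_list_eq]
  calc ((fun h : QuadPattern C => h.inst (skExt r μ)) '' ↑r.head.toFinset).ncard
      ≤ (↑r.head.toFinset : Set (QuadPattern C)).ncard :=
        Set.ncard_image_le (r.head.toFinset.finite_toSet)
    _ = r.head.toFinset.card := Set.ncard_coe_finset _
    _ ≤ r.head.length := (List.toFinset_card_le _)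

lemma seqChase_finite {QS : QuadSystem C} {D : ℕ → Set (GQuad C)}
    (hq : QS.quads.Finite) (hseq : IsSeqChase QS D) : ∀ n, (D n).Finite := by
  intro n
  induction n with
  | zero => rw [hseq.1]; exact hq.image _
  | succ n ih =>
      rcases hseq.2 n with ⟨r, _, μ, _, hD⟩ | ⟨_, hD⟩
      · rw [hD]; exact ih.union (applyRule_finite r μ)
      · rw [hD]; exact ih

lemma mem_patsVars {l : List (QuadPattern C)} {v : ℕ} :
    v ∈ patsVars l ↔ ∃ q ∈ l, v ∈ q.varsOf := by
  induction l with
  | nil => simp [patsVars]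
  | cons q l ih =>
      simp only [patsVars, List.foldr_cons] at *
      simp [Finset.mem_union, ih]

lemma term_varsOf_card (t : Term C) : t.varsOf.card ≤ 1 := by
  cases t <;> simp [Term.varsOf]

lemma quadPattern_varsOf_card (q : QuadPattern C) : q.varsOf.card ≤ 3 := by
  calc q.varsOf.card ≤ (q.s.varsOf ∪ q.p.varsOf).card + q.o.varsOf.card :=
        Finset.card_union_le _ _
    _ ≤ (q.s.varsOf.card + q.p.varsOf.card) + q.o.varsOf.card := by
        exact Nat.add_le_add_right (Finset.card_union_le _ _) _
    _ ≤ 3 := by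
        have := term_varsOf_card q.s
        have := term_varsOf_card q.p
        have := term_varsOf_card q.o
        omega

lemma patsVars_card (l : List (QuadPattern C)) : (patsVars l).card ≤ 3 * l.length := by
  induction l with
  | nil => simp [patsVars]
  | cons q l ih =>
      have h1 : patsVars (q :: l) = q.varsOf ∪ patsVars l := rfl
      calc (patsVars (q :: l)).card ≤ q.varsOf.card + (patsVars l).card := by
            rw [h1]; exact Finset.card_union_le _ _
        _ ≤ 3 + 3 * l.length := Nat.add_le_add (quadPattern_varsOf_card q) ih
        _ = 3 * (q :: l).length := by simp [List.length_cons]; ring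

/-- The Finset of lists of a given length over a given Finset of symbols. -/
def listsOf {α : Type*} [DecidableEq α] (A : Finset α) : ℕ → Finset (List α)
  | 0 => {[]}
  | L + 1 => (A ×ˢ listsOf A L).image fun p => p.1 :: p.2

lemma mem_listsOf {α : Type*} [DecidableEq α] {A : Finset α} :
    ∀ {L : ℕ} {w : List α}, w.length = L → (∀ x ∈ w, x ∈ A) → w ∈ listsOf A L := by
  intro L
  induction L with
  | zero => intro w hw _; rw [List.length_eq_zero_iff] at hw; simp [hw, listsOf]
  | succ L ih =>
      intro w hw hmem
      cases w with
      | nil => simp at hw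
      | cons a w =>
          simp only [listsOf, Finset.mem_image]
          refine ⟨(a, w), ?_, rfl⟩
          rw [Finset.mem_product]
          exact ⟨hmem a (by simp), ih (by simpa using hw)
            (fun x hx => hmem x (by simp [hx]))⟩

lemma card_listsOf {α : Type*} [DecidableEq α] (A : Finset α) (L : ℕ) :
    (listsOf A L).card ≤ A.card ^ L := by
  induction L with
  | zero => simp [listsOf]
  | succ L ih =>
      calc (listsOf A (L + 1)).card ≤ (A ×ˢ listsOf A L).card :=
            Finset.card_image_le
        _ = A.card * (listsOf A L).card := Finset.card_product _ _
        _ ≤ A.card * A.card ^ L := Nat.mul_le_mul_left _ ih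
        _ = A.card ^ (L + 1) := (pow_succ' A.card L).symm

lemma getD_map_indexOf {l : List ℕ} {v : ℕ} (hv : v ∈ l) (μ : ℕ → SConst C)
    (d : SConst C) : (l.map μ).getD (l.idxOf v) d = μ v := by
  have h1 : l.idxOf v < l.length := List.idxOf_lt_length_iff.2 hv
  rw [List.getD_eq_getElem _ _ (by simpa using h1), List.getElem_map]
  congr 1
  exact List.getElem_idxOf h1

lemma key_arith {m h b f rs : ℕ} (hm : 2 ≤ m) (hf : f ≤ 3 * b)
    (hrs : 4 * (b + h) ≤ rs) : h * m ^ f ≤ m ^ rs := by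
  have h1 : h ≤ m ^ (4 * h) := by
    calc h ≤ 2 ^ h := (Nat.lt_two_pow_self (n := h)).le
      _ ≤ 2 ^ (4 * h) := Nat.pow_le_pow_right (by norm_num) (by omega)
      _ ≤ m ^ (4 * h) := Nat.pow_le_pow_left hm _
  calc h * m ^ f ≤ m ^ (4 * h) * m ^ f := Nat.mul_le_mul_right _ h1
    _ = m ^ (4 * h + f) := (pow_add m _ _).symm
    _ ≤ m ^ rs := Nat.pow_le_pow_right (by omega) (by omega)

end ChaseComplexityAux

theorem dChase_iteration_complexity :
    ∃ K : ℕ, ∀ (C : Type) (QS : QuadSystem C) (D : ℕ → Set (GQuad C)),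
      QS.WF → IsSeqChase QS D → ∀ i : ℕ, 0 < i →
        -- (i): the search space for computing iteration `i` from iteration `i-1`
        -- has size `O(|R| · ‖dChase_{i-1}‖^{rs})`
        (Set.ncard {q : GQuad C | ∃ r ∈ QS.rules, ∃ μ : ℕ → SConst C,
            applicable r μ (D (i - 1)) ∧ q ∈ applyRule r μ} ≤
          K * QS.rules.ncard * (chaseSize (D (i - 1)) + 2) ^ maxRuleSize QS) ∧
        -- (ii): `‖dChase_i‖ = O(‖dChase_{i-1}‖ + ‖R‖)`
        chaseSize (D i) ≤ K * (chaseSize (D (i - 1)) + rulesSize QS.rules + 1) := by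
  refine ⟨1, ?_⟩
  intro C QS D hWF hseq i hi
  classical
  obtain ⟨hWFr, -, hqfin, hrfin⟩ := hWF
  obtain ⟨j, rfl⟩ : ∃ j, i = j + 1 := ⟨i - 1, (Nat.succ_pred_eq_of_pos hi).symm⟩
  simp only [Nat.add_sub_cancel]
  have hDfin : ∀ n, (D n).Finite := seqChase_finite hqfin hseq
  have hfin : (D j).Finite := hDfin j
  constructor
  · -- part (i)
    set m := chaseSize (D j) + 2 with hm
    have hm2 : 2 ≤ m := by omega
    set Dfin := hfin.toFinset with hDf
    set consts : Finset (SConst C) :=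
      Dfin.image GQuad.s ∪ Dfin.image GQuad.p ∪ Dfin.image GQuad.o with hconsts
    have hconstsCard : consts.card ≤ m := by
      have h1 : consts.card ≤ Dfin.card + Dfin.card + Dfin.card := by
        calc consts.card ≤ (Dfin.image GQuad.s ∪ Dfin.image GQuad.p).card
              + (Dfin.image GQuad.o).card := Finset.card_union_le _ _
          _ ≤ ((Dfin.image GQuad.s).card + (Dfin.image GQuad.p).card)
              + (Dfin.image GQuad.o).card :=
            Nat.add_le_add_right (Finset.card_union_le _ _) _
          _ ≤ Dfin.card + Dfin.card + Dfin.card := by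
            have := Finset.card_image_le (s := Dfin) (f := GQuad.s)
            have := Finset.card_image_le (s := Dfin) (f := GQuad.p)
            have := Finset.card_image_le (s := Dfin) (f := GQuad.o)
            omega
      have hD : Dfin.card = (D j).ncard := by
        rw [← Set.ncard_coe_finset, hfin.coe_toFinset]
      have hcs : chaseSize (D j) = 4 * (D j).ncard := rfl
      omega
    set dflt : SConst C := SConst.sk 0 0 [] with hdflt
    set ν : BridgeRule C → List (SConst C) → ℕ → SConst C := fun r w v =>
      if v ∈ r.exVars then SConst.sk r.id v w
      else w.getD (r.frontier.idxOf v) dflt with hν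
    set Rfin := hrfin.toFinset with hRf
    set B : Finset (GQuad C) := Rfin.biUnion (fun r =>
      ((listsOf consts r.frontier.length) ×ˢ r.head.toFinset).image
        (fun p => p.2.inst (ν r p.1))) with hB
    have hsub : {q : GQuad C | ∃ r ∈ QS.rules, ∃ μ : ℕ → SConst C,
        applicable r μ (D j) ∧ q ∈ applyRule r μ} ⊆ ↑B := by
      intro q hq
      obtain ⟨r, hr, μ, ⟨hbody, -⟩, hq⟩ := hq
      obtain ⟨h, hh, rfl⟩ := hq
      have hrWF := hWFr r hr
      refine Finset.mem_coe.2 (Finset.mem_biUnion.2 ⟨r, hrfin.mem_toFinset.2 hr, ?_⟩)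
      refine Finset.mem_image.2 ⟨(r.frontier.map μ, h), ?_, ?_⟩
      · rw [Finset.mem_product]
        constructor
        · apply mem_listsOf (by simp)
          intro x hx
          obtain ⟨v, hvfr, rfl⟩ := List.mem_map.1 hx
          have hvb : v ∈ patsVars r.body := hrWF.2.1 v hvfr
          obtain ⟨qp, hqp, hvq⟩ := mem_patsVars.1 hvb
          have hmem : qp.inst μ ∈ Dfin := hfin.mem_toFinset.2 (hbody qp hqp)
          simp only [QuadPattern.varsOf, Finset.mem_union] at hvq
          rcases hvq with (hvq | hvq) | hvq
          · refine Finset.mem_union_left _ (Finset.mem_union_left _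
              (Finset.mem_image.2 ⟨qp.inst μ, hmem, ?_⟩))
            simp [QuadPattern.inst, mem_term_varsOf hvq, Term.inst]
          · refine Finset.mem_union_left _ (Finset.mem_union_right _
              (Finset.mem_image.2 ⟨qp.inst μ, hmem, ?_⟩))
            simp [QuadPattern.inst, mem_term_varsOf hvq, Term.inst]
          · refine Finset.mem_union_right _
              (Finset.mem_image.2 ⟨qp.inst μ, hmem, ?_⟩)
            simp [QuadPattern.inst, mem_term_varsOf hvq, Term.inst]
        · exact List.mem_toFinset.2 hh
      · apply QuadPattern.inst_congr
        intro v hv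
        by_cases hvex : v ∈ r.exVars
        · simp [hν, skExt, hvex]
        · have hvhead : v ∈ patsVars r.head := mem_patsVars.2 ⟨h, hh, hv⟩
          have hvfr : v ∈ r.frontier := hrWF.1 v hvhead hvex
          simp only [hν, skExt, if_neg hvex]
          exact getD_map_indexOf hvfr μ dflt
    have hcard : {q : GQuad C | ∃ r ∈ QS.rules, ∃ μ : ℕ → SConst C,
        applicable r μ (D j) ∧ q ∈ applyRule r μ}.ncard ≤ B.card := by
      have := Set.ncard_le_ncard hsub B.finite_toSet
      simpa [Set.ncard_coe_finset] using this
    refine hcard.trans ?_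
    have hper : ∀ r ∈ Rfin,
        (((listsOf consts r.frontier.length) ×ˢ r.head.toFinset).image
          (fun p => p.2.inst (ν r p.1))).card ≤ m ^ maxRuleSize QS := by
      intro r hrR
      have hr : r ∈ QS.rules := hrfin.mem_toFinset.1 hrR
      have hrWF := hWFr r hr
      have hfr : r.frontier.length ≤ 3 * r.body.length := by
        have h1 : r.frontier.toFinset ⊆ patsVars r.body := fun v hv =>
          hrWF.2.1 v (List.mem_toFinset.1 hv)
        calc r.frontier.length = r.frontier.toFinset.card :=
              (List.toFinset_card_of_nodup hrWF.2.2.2).symm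
          _ ≤ (patsVars r.body).card := Finset.card_le_card h1
          _ ≤ 3 * r.body.length := patsVars_card _
      have hrs : 4 * (r.body.length + r.head.length) ≤ maxRuleSize QS :=
        le_csSup ((hrfin.image _).bddAbove) ⟨r, hr, rfl⟩
      calc (((listsOf consts r.frontier.length) ×ˢ r.head.toFinset).image
            (fun p => p.2.inst (ν r p.1))).card
          ≤ ((listsOf consts r.frontier.length) ×ˢ r.head.toFinset).card :=
            Finset.card_image_le
        _ = (listsOf consts r.frontier.length).card * r.head.toFinset.card :=
            Finset.card_product _ _
        _ ≤ consts.card ^ r.frontier.length * r.head.length :=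
            Nat.mul_le_mul (card_listsOf _ _) (List.toFinset_card_le _)
        _ ≤ m ^ r.frontier.length * r.head.length :=
            Nat.mul_le_mul_right _ (Nat.pow_le_pow_left hconstsCard _)
        _ = r.head.length * m ^ r.frontier.length := mul_comm _ _
        _ ≤ m ^ maxRuleSize QS := key_arith hm2 hfr hrs
    calc B.card ≤ ∑ r ∈ Rfin, (((listsOf consts r.frontier.length) ×ˢ r.head.toFinset).image
            (fun p => p.2.inst (ν r p.1))).card := Finset.card_biUnion_le
      _ ≤ ∑ _r ∈ Rfin, m ^ maxRuleSize QS := Finset.sum_le_sum hper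
      _ = Rfin.card * m ^ maxRuleSize QS := by rw [Finset.sum_const, smul_eq_mul]
      _ = 1 * QS.rules.ncard * m ^ maxRuleSize QS := by
          rw [one_mul]; congr 1
          rw [← Set.ncard_coe_finset, hrfin.coe_toFinset]
  · -- part (ii)
    rcases hseq.2 j with ⟨r, hr, μ, -, hD⟩ | ⟨-, hD⟩
    · rw [hD]
      have h1 : chaseSize (D j ∪ applyRule r μ) ≤ chaseSize (D j) + 4 * r.head.length := by
        have hu := Set.ncard_union_le (D j) (applyRule r μ)
        have ha := ncard_applyRule_le r μ
        have hcs : chaseSize (D j ∪ applyRule r μ) = 4 * (D j ∪ applyRule r μ).ncard := rfl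
        have hcs2 : chaseSize (D j) = 4 * (D j).ncard := rfl
        omega
      have h2 : 4 * r.head.length ≤ rulesSize QS.rules := by
        have hsz : BridgeRule.size r ≤ rulesSize QS.rules := by
          unfold rulesSize
          rw [← hrfin.coe_toFinset, finsum_mem_coe_finset]
          exact Finset.single_le_sum (f := fun r => BridgeRule.size r)
            (fun _ _ => Nat.zero_le _) (hrfin.mem_toFinset.2 hr)
        unfold BridgeRule.size at hsz
        omega
      omega
    · rw [hD]; omega
end

section
/- The contextualized conjunctive query entailment problem over unrestricted quad-systems is undecidable. Specifically, for any two context-free grammars G₁ = ⟨V₁, T, S₁, P₁⟩ and G₂ = ⟨V₂, T, S₂, P₂⟩ over terminals T, one can construct in polynomial time a quad-system QS_c = ⟨{c:(a, rdf:type, C)}, R⟩ — where R encodes each production v → w₁…wₙ as the BR c:(x₁,w₁,x₂) ∧ … ∧ c:(xₙ,wₙ,xₙ₊₁) → c:(x₁,v,xₙ₊₁) and contains, for each terminal tᵢ ∈ T, the BR c:(x, rdf:type, C) → ∃y c:(x,tᵢ,y) ∧ c:(y, rdf:type, C) — such that QS_c ⊨ ∃y c:(a, S₁, y) ∧ c:(a,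 S₂, y) iff L(G₁) ∩ L(G₂) ≠ ∅; since non-emptiness of intersection of context-free languages is undecidable, so is CCQ entailment. -/
/-! ### Statement: undecidability of CCQ entailment over unrestricted quad-systems,
via reduction of non-emptiness of the intersection of two context-free languages.
For CFGs `G₁, G₂` over terminals `T`, the quad-system below (with a single context
`c`, encoding each production `v → w₁…wₙ` as the bridge rule
`c:(x₁,w₁,x₂) ∧ … ∧ c:(xₙ,wₙ,xₙ₊₁) → c:(x₁,v,xₙ₊₁)` and containing, for each
terminal `t`, the bridge rule
`c:(x, rdf:type, C) → ∃y c:(x,t,y) ∧ c:(y, rdf:type, C)`) entails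
`∃y c:(a,S₁,y) ∧ c:(a,S₂,y)` iff `L(G₁) ∩ L(G₂) ≠ ∅`.  Since the latter problem is
undecidable, so is CCQ entailment. -/

/-- Constants used in the encoding: terminals, nonterminals of the two grammars, and
the distinguished constants `a`, `rdf:type`, `C` and the context `c`. -/
inductive EncC (T N₁ N₂ : Type) : Type
  | term : T → EncC T N₁ N₂
  | nt1 : N₁ → EncC T N₁ N₂
  | nt2 : N₂ → EncC T N₁ N₂
  | a : EncC T N₁ N₂
  | typ : EncC T N₁ N₂
  | cls : EncC T N₁ N₂
  | ctx : EncC T N₁ N₂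

/-- Encoding of a grammar symbol as a constant. -/
def symC {T N₁ N₂ N : Type} (emb : N → EncC T N₁ N₂) : Symbol T N → EncC T N₁ N₂
  | .terminal t => .term t
  | .nonterminal n => emb n

/-- The bridge rule `c:(x₁,w₁,x₂), …, c:(xₙ,wₙ,xₙ₊₁) → c:(x₁,v,xₙ₊₁)` encoding the
production `v → w₁…wₙ`. -/
def prodBR {T N₁ N₂ N : Type} (emb : N → EncC T N₁ N₂) (pr : ContextFreeRule T N) :
    BridgeRule (EncC T N₁ N₂) where
  id := 0
  body := pr.output.zipIdx.map fun p =>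
    ⟨EncC.ctx, Term.var p.2, Term.const (symC emb p.1), Term.var (p.2 + 1)⟩
  head := [⟨EncC.ctx, Term.var 0, Term.const (emb pr.input), Term.var pr.output.length⟩]
  frontier := [0, pr.output.length]
  exVars := ∅

/-- The bridge rule `c:(x, rdf:type, C) → ∃y c:(x,t,y) ∧ c:(y, rdf:type, C)` for a
terminal `t`. -/
def termBR {T N₁ N₂ : Type} (t : T) : BridgeRule (EncC T N₁ N₂) where
  id := 0
  body := [⟨EncC.ctx, Term.var 0, Term.const EncC.typ, Term.const EncC.cls⟩]
  head := [⟨EncC.ctx, Term.var 0, Term.const (EncC.term t), Term.var 1⟩,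
           ⟨EncC.ctx, Term.var 1, Term.const EncC.typ, Term.const EncC.cls⟩]
  frontier := [0]
  exVars := {1}

/-- The quad-system `QS_c = ⟨{c:(a, rdf:type, C)}, R⟩` encoding the two grammars. -/
def cfgQS {T : Type} (G₁ G₂ : ContextFreeGrammar T) : QuadSystem (EncC T G₁.NT G₂.NT) where
  quads := {⟨EncC.ctx, EncC.a, EncC.typ, EncC.cls⟩}
  rules := {r | (∃ pr ∈ G₁.rules, r = prodBR EncC.nt1 pr) ∨
                (∃ pr ∈ G₂.rules, r = prodBR EncC.nt2 pr) ∨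
                (∃ t : T, r = termBR t)}

/-- The boolean CCQ `∃y c:(a, S₁, y) ∧ c:(a, S₂, y)`. -/
def cfgCQ {T : Type} (G₁ G₂ : ContextFreeGrammar T) : CCQ (EncC T G₁.NT G₂.NT) :=
  [⟨EncC.ctx, Term.const EncC.a, Term.const (EncC.nt1 G₁.initial), Term.var 0⟩,
   ⟨EncC.ctx, Term.const EncC.a, Term.const (EncC.nt2 G₂.initial), Term.var 0⟩]


/-! ## Auxiliary development for the proof -/

namespace CCQUndecAux

open ContextFreeGrammar

variable {T N₁ N₂ : Type}

/-- A span: a chain of `holds`-edges in context `c` labelled by a list of constants. -/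
def spanI (I : Interp (EncC T N₁ N₂)) : List (EncC T N₁ N₂) → I.Dom → I.Dom → Prop
  | [], d, d' => d = d'
  | c :: l, d, d' => ∃ e, I.holds EncC.ctx d (I.constInt c) e ∧ spanI I l e d'

lemma spanI_nil (I : Interp (EncC T N₁ N₂)) (d d' : I.Dom) :
    spanI I [] d d' ↔ d = d' := Iff.rfl

lemma spanI_cons (I : Interp (EncC T N₁ N₂)) (c : EncC T N₁ N₂) (l : List (EncC T N₁ N₂))
    (d d' : I.Dom) :
    spanI I (c :: l) d d' ↔ ∃ e, I.holds EncC.ctx d (I.constInt c) e ∧ spanI I l e d' :=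
  Iff.rfl

lemma spanI_append (I : Interp (EncC T N₁ N₂)) (l₁ l₂ : List (EncC T N₁ N₂)) (d d' : I.Dom) :
    spanI I (l₁ ++ l₂) d d' ↔ ∃ e, spanI I l₁ d e ∧ spanI I l₂ e d' := by
  induction l₁ generalizing d with
  | nil =>
    simp only [List.nil_append, spanI_nil]
    exact ⟨fun h => ⟨d, rfl, h⟩, fun ⟨e, he, h⟩ => he ▸ h⟩
  | cons c l ih =>
    simp only [List.cons_append, spanI_cons, ih]
    constructor
    · rintro ⟨e, he, f, h1, h2⟩
      exact ⟨f, ⟨e, he, h1⟩, h2⟩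
    · rintro ⟨f, ⟨e, he, h1⟩, h2⟩
      exact ⟨e, he, f, h1, h2⟩

lemma spanI_points (I : Interp (EncC T N₁ N₂)) :
    ∀ (l : List (EncC T N₁ N₂)) (d d' : I.Dom), spanI I l d d' →
      ∃ σ : ℕ → I.Dom, σ 0 = d ∧ σ l.length = d' ∧
        ∀ i, ∀ hi : i < l.length, I.holds EncC.ctx (σ i) (I.constInt l[i]) (σ (i + 1))
  | [], d, d', h => ⟨fun _ => d, rfl, h.symm ▸ rfl, fun i hi => absurd hi (by simp)⟩
  | c :: l, d, d', ⟨e, he, hl⟩ => by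
    obtain ⟨σ, h0, hn, hE⟩ := spanI_points I l e d' hl
    refine ⟨fun i => match i with | 0 => d | j + 1 => σ j, rfl, hn, ?_⟩
    intro i hi
    match i with
    | 0 => simpa [h0] using he
    | j + 1 =>
      have hj : j < l.length := by simpa using hi
      simpa using hE j hj

/-- Soundness of a production bridge rule in any interpretation satisfying it. -/
lemma holds_of_span_prodBR {N : Type} (I : Interp (EncC T N₁ N₂)) (emb : N → EncC T N₁ N₂)
    (pr : ContextFreeRule T N) (hr : I.satRule (prodBR emb pr)) (d d' : I.Dom)
    (hs : spanI I (pr.output.map (symC emb)) d d') :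
    I.holds EncC.ctx d (I.constInt (emb pr.input)) d' := by
  obtain ⟨σ, h0, hn, hE⟩ := spanI_points I _ d d' hs
  have hbody : ∀ q ∈ (prodBR emb pr).body, I.satQP σ q := by
    intro q hq
    simp only [prodBR, List.mem_map] at hq
    obtain ⟨⟨s, i⟩, hmem, rfl⟩ := hq
    rw [List.mk_mem_zipIdx_iff_getElem?] at hmem
    obtain ⟨hi, hsi⟩ := List.getElem?_eq_some_iff.1 hmem
    have hi' : i < (pr.output.map (symC emb)).length := by simpa using hi
    have := hE i hi'
    rw [List.getElem_map] at this
    rw [hsi] at this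
    exact this
  obtain ⟨σ', hagree, hhead⟩ := hr σ hbody
  have hall : ∀ v, σ' v = σ v := fun v => hagree v (by simp [prodBR])
  have hh := hhead _ (List.mem_singleton.2 rfl)
  have : I.holds EncC.ctx (σ' 0) (I.constInt (emb pr.input)) (σ' pr.output.length) := hh
  rw [hall, hall] at this
  rw [h0] at this
  have hlen : (pr.output.map (symC emb)).length = pr.output.length := by simp
  rw [← hlen, hn] at this
  exact this

/-- Derivations transfer spans from the derived word back to the starting string. -/
lemma span_of_derives (I : Interp (EncC T N₁ N₂)) (G : ContextFreeGrammar T)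
    (emb : G.NT → EncC T N₁ N₂)
    (hrules : ∀ pr ∈ G.rules, I.satRule (prodBR emb pr))
    {α : List (Symbol T G.NT)} {w : List T}
    (hder : G.Derives α (w.map Symbol.terminal))
    {d d' : I.Dom} (hs : spanI I (w.map EncC.term) d d') :
    spanI I (α.map (symC emb)) d d' := by
  induction hder using Relation.ReflTransGen.head_induction_on with
  | refl =>
    have : (w.map (Symbol.terminal : T → Symbol T G.NT)).map (symC emb)
        = w.map EncC.term := by
      rw [List.map_map]; rfl
    rwa [this]
  | head hprod _ ih =>
    obtain ⟨r, hrmem, hrw⟩ := hprod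
    obtain ⟨p, q, rfl, rfl⟩ := hrw.exists_parts
    rw [List.map_append, List.map_append, spanI_append, ] at ih
    obtain ⟨e₂, hpe, hq⟩ := ih
    rw [spanI_append] at hpe
    obtain ⟨e₁, hp, hout⟩ := hpe
    have hmid : I.holds EncC.ctx e₁ (I.constInt (emb r.input)) e₂ :=
      holds_of_span_prodBR I emb r (hrules r hrmem) e₁ e₂ hout
    rw [List.map_append, List.map_append, spanI_append]
    refine ⟨e₂, ?_, hq⟩
    rw [spanI_append]
    exact ⟨e₁, hp, e₂, hmid, rfl⟩

/-- In a model of all `termBR` rules, every node extends by any word. -/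
lemma word_span (I : Interp (EncC T N₁ N₂)) (hterm : ∀ t : T, I.satRule (termBR t)) :
    ∀ (w : List T) (d : I.Dom),
      I.holds EncC.ctx d (I.constInt EncC.typ) (I.constInt EncC.cls) →
      ∃ d', spanI I (w.map EncC.term) d d' ∧
        I.holds EncC.ctx d' (I.constInt EncC.typ) (I.constInt EncC.cls)
  | [], d, hd => ⟨d, rfl, hd⟩
  | t :: w, d, hd => by
    obtain ⟨σ', hagree, hhead⟩ := hterm t (fun _ => d) (by
      intro q hq
      simp only [termBR, List.mem_singleton] at hq
      subst hq
      exact hd)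
    have h1 : I.holds EncC.ctx (σ' 0) (I.constInt (EncC.term t)) (σ' 1) :=
      hhead ⟨EncC.ctx, Term.var 0, Term.const (EncC.term t), Term.var 1⟩
        (by simp [termBR])
    have h2 : I.holds EncC.ctx (σ' 1) (I.constInt EncC.typ) (I.constInt EncC.cls) :=
      hhead ⟨EncC.ctx, Term.var 1, Term.const EncC.typ, Term.const EncC.cls⟩
        (by simp [termBR])
    have h0 : σ' 0 = d := hagree 0 (by simp [termBR])
    rw [h0] at h1
    obtain ⟨d', hspan, hd'⟩ := word_span I hterm w (σ' 1) h2
    exact ⟨d', ⟨σ' 1, h1, hspan⟩, hd'⟩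

/-! ### The canonical word model -/

/-- Position of a domain element of the canonical model. -/
def pos : (EncC T N₁ N₂ ⊕ List T) → List T
  | .inr u => u
  | .inl _ => []

/-- The `holds` relation of the canonical model. -/
def cHolds (G₁ G₂ : ContextFreeGrammar T) (c : EncC T G₁.NT G₂.NT)
    (x p y : EncC T G₁.NT G₂.NT ⊕ List T) : Prop :=
  c = EncC.ctx ∧
    ((∃ t : T, p = Sum.inl (EncC.term t) ∧ pos y = pos x ++ [t]) ∨
     (p = Sum.inl EncC.typ ∧ y = Sum.inl EncC.cls) ∨
     (∃ n, p = Sum.inl (EncC.nt1 n) ∧ ∃ z, pos y = pos x ++ z ∧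
        G₁.Derives [Symbol.nonterminal n] (z.map Symbol.terminal)) ∨
     (∃ n, p = Sum.inl (EncC.nt2 n) ∧ ∃ z, pos y = pos x ++ z ∧
        G₂.Derives [Symbol.nonterminal n] (z.map Symbol.terminal)))

/-- The canonical model. -/
def canon (G₁ G₂ : ContextFreeGrammar T) : Interp (EncC T G₁.NT G₂.NT) :=
  ⟨EncC T G₁.NT G₂.NT ⊕ List T, Sum.inl, cHolds G₁ G₂⟩

lemma canon_chain (G₁ G₂ : ContextFreeGrammar T) (G : ContextFreeGrammar T)
    (emb : G.NT → EncC T G₁.NT G₂.NT)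
    (hembE : ∀ (n : G.NT) (x y), cHolds G₁ G₂ EncC.ctx x (Sum.inl (emb n)) y →
      ∃ z, pos y = pos x ++ z ∧ G.Derives [Symbol.nonterminal n] (z.map Symbol.terminal)) :
    ∀ (l : List (Symbol T G.NT)) (σ : ℕ → (EncC T G₁.NT G₂.NT ⊕ List T)),
      (∀ i, ∀ hi : i < l.length,
        cHolds G₁ G₂ EncC.ctx (σ i) (Sum.inl (symC emb l[i])) (σ (i + 1))) →
      ∃ z, pos (σ l.length) = pos (σ 0) ++ z ∧ G.Derives l (z.map Symbol.terminal)
  | [], σ, _ => ⟨[], by simp, by exact Derives.refl []⟩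
  | s :: l, σ, h => by
    obtain ⟨z, hz, hder⟩ := canon_chain G₁ G₂ G emb hembE l (fun i => σ (i + 1)) (by
      intro i hi
      have := h (i + 1) (by simpa using Nat.succ_lt_succ hi)
      simpa using this)
    have h0 := h 0 (Nat.succ_pos _)
    simp only [List.getElem_cons_zero] at h0
    match s with
    | .terminal t =>
      obtain ⟨-, hc⟩ := h0
      have h01 : pos (σ 1) = pos (σ 0) ++ [t] := by
        rcases hc with ⟨t', ht', hp⟩ | ⟨ht, -⟩ | ⟨n, hn, -⟩ | ⟨n, hn, -⟩
        · cases Sum.inl.inj ht' with | refl => exact hp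
        · exact absurd (Sum.inl.inj ht) (by simp [symC])
        · exact absurd (Sum.inl.inj hn) (by simp [symC])
        · exact absurd (Sum.inl.inj hn) (by simp [symC])
      refine ⟨t :: z, ?_, ?_⟩
      · show pos (σ (l.length + 1)) = pos (σ 0) ++ (t :: z)
        rw [hz, h01, List.append_assoc]
        rfl
      · have := hder.append_left [Symbol.terminal t]
        simpa using this
    | .nonterminal n =>
      obtain ⟨z₀, hz₀, hder₀⟩ := hembE n (σ 0) (σ 1) h0
      refine ⟨z₀ ++ z, ?_, ?_⟩
      · show pos (σ (l.length + 1)) = pos (σ 0) ++ (z₀ ++ z)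
        rw [hz, hz₀, List.append_assoc]
      · have h1 : G.Derives ([Symbol.nonterminal n] ++ l)
            ((z₀.map Symbol.terminal) ++ l) := hder₀.append_right l
        have h2 : G.Derives ((z₀.map Symbol.terminal) ++ l)
            ((z₀.map Symbol.terminal) ++ (z.map Symbol.terminal)) := hder.append_left _
        have := h1.trans h2
        simpa [List.map_append] using this

lemma canon_satRule_prod (G₁ G₂ : ContextFreeGrammar T) (G : ContextFreeGrammar T)
    (emb : G.NT → EncC T G₁.NT G₂.NT)
    (hembE : ∀ (n : G.NT) (x y), cHolds G₁ G₂ EncC.ctx x (Sum.inl (emb n)) y →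
      ∃ z, pos y = pos x ++ z ∧ G.Derives [Symbol.nonterminal n] (z.map Symbol.terminal))
    (hembI : ∀ (n : G.NT) (x y : EncC T G₁.NT G₂.NT ⊕ List T) (z : List T),
      pos y = pos x ++ z → G.Derives [Symbol.nonterminal n] (z.map Symbol.terminal) →
      cHolds G₁ G₂ EncC.ctx x (Sum.inl (emb n)) y)
    (pr : ContextFreeRule T G.NT) (hpr : pr ∈ G.rules) :
    (canon G₁ G₂).satRule (prodBR emb pr) := by
  intro σ hbody
  refine ⟨σ, fun _ _ => rfl, ?_⟩
  intro q hq
  simp only [prodBR, List.mem_singleton] at hq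
  subst hq
  have hE : ∀ i, ∀ hi : i < pr.output.length,
      cHolds G₁ G₂ EncC.ctx (σ i) (Sum.inl (symC emb pr.output[i])) (σ (i + 1)) := by
    intro i hi
    have hmem : (pr.output[i], i) ∈ pr.output.zipIdx :=
      List.mk_mem_zipIdx_iff_getElem?.2 (List.getElem?_eq_getElem hi)
    have := hbody _ (List.mem_map.2 ⟨(pr.output[i], i), hmem, rfl⟩)
    exact this
  obtain ⟨z, hz, hder⟩ := canon_chain G₁ G₂ G emb hembE pr.output σ hE
  have hfull : G.Derives [Symbol.nonterminal pr.input] (z.map Symbol.terminal) :=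
    Produces.trans_derives ⟨pr, hpr, ContextFreeRule.Rewrites.input_output⟩ hder
  exact hembI pr.input (σ 0) (σ pr.output.length) z hz hfull

lemma canon_isModel (G₁ G₂ : ContextFreeGrammar T) :
    (canon G₁ G₂).isModel (cfgQS G₁ G₂) := by
  constructor
  · intro q hq
    cases hq
    exact ⟨rfl, Or.inr (Or.inl ⟨rfl, rfl⟩)⟩
  · intro r hr
    rcases hr with ⟨pr, hpr, rfl⟩ | ⟨pr, hpr, rfl⟩ | ⟨t, rfl⟩
    · refine canon_satRule_prod G₁ G₂ G₁ EncC.nt1 ?_ ?_ pr hpr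
      · rintro n x y ⟨-, hc⟩
        rcases hc with ⟨t', ht', -⟩ | ⟨ht, -⟩ | ⟨m, hm, hz⟩ | ⟨m, hm, -⟩
        · exact absurd (Sum.inl.inj ht') (by simp)
        · exact absurd (Sum.inl.inj ht) (by simp)
        · cases Sum.inl.inj hm with | refl => exact hz
        · exact absurd (Sum.inl.inj hm) (by simp)
      · intro n x y z h1 h2
        exact ⟨rfl, Or.inr (Or.inr (Or.inl ⟨n, rfl, z, h1, h2⟩))⟩
    · refine canon_satRule_prod G₁ G₂ G₂ EncC.nt2 ?_ ?_ pr hpr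
      · rintro n x y ⟨-, hc⟩
        rcases hc with ⟨t', ht', -⟩ | ⟨ht, -⟩ | ⟨m, hm, -⟩ | ⟨m, hm, hz⟩
        · exact absurd (Sum.inl.inj ht') (by simp)
        · exact absurd (Sum.inl.inj ht) (by simp)
        · exact absurd (Sum.inl.inj hm) (by simp)
        · cases Sum.inl.inj hm with | refl => exact hz
      · intro n x y z h1 h2
        exact ⟨rfl, Or.inr (Or.inr (Or.inr ⟨n, rfl, z, h1, h2⟩))⟩
    · intro σ hbody
      refine ⟨fun v => match v with
        | 1 => Sum.inr (pos (σ 0) ++ [t])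
        | v => σ v, ?_, ?_⟩
      · intro v hv
        have hv1 : v ≠ 1 := by simpa [termBR] using hv
        match v with
        | 0 => rfl
        | 1 => exact absurd rfl hv1
        | (n + 2) => rfl
      · intro q hq
        simp only [termBR, List.mem_cons, List.mem_singleton, List.not_mem_nil,
          or_false] at hq
        rcases hq with rfl | rfl
        · exact ⟨rfl, Or.inl ⟨t, rfl, rfl⟩⟩
        · exact ⟨rfl, Or.inr (Or.inl ⟨rfl, rfl⟩)⟩

end CCQUndecAux

/-- Correctness of the reduction: `QS_c ⊨ ∃y c:(a,S₁,y) ∧ c:(a,S₂,y)` iff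
`L(G₁) ∩ L(G₂) ≠ ∅`.  Since non-emptiness of the intersection of context-free
languages is undecidable, CCQ entailment over unrestricted quad-systems is
undecidable. -/
theorem cfg_intersection_reduces_to_ccq_entailment
    {T : Type} (G₁ G₂ : ContextFreeGrammar T) :
    entailsCCQ (cfgQS G₁ G₂) (cfgCQ G₁ G₂) ↔
      ∃ w : List T, w ∈ G₁.language ∧ w ∈ G₂.language := by
  classical
  open CCQUndecAux in
  constructor
  · intro hent
    obtain ⟨σ, hq⟩ := hent (canon G₁ G₂) (canon_isModel G₁ G₂)
    have h1 : cHolds G₁ G₂ EncC.ctx (Sum.inl EncC.a)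
        (Sum.inl (EncC.nt1 G₁.initial)) (σ 0) :=
      hq ⟨EncC.ctx, Term.const EncC.a, Term.const (EncC.nt1 G₁.initial), Term.var 0⟩
        (by simp [cfgCQ])
    have h2 : cHolds G₁ G₂ EncC.ctx (Sum.inl EncC.a)
        (Sum.inl (EncC.nt2 G₂.initial)) (σ 0) :=
      hq ⟨EncC.ctx, Term.const EncC.a, Term.const (EncC.nt2 G₂.initial), Term.var 0⟩
        (by simp [cfgCQ])
    obtain ⟨-, hc1⟩ := h1
    obtain ⟨-, hc2⟩ := h2
    have hw1 : ∃ z, pos (σ 0) = z ∧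
        G₁.Derives [Symbol.nonterminal G₁.initial] (z.map Symbol.terminal) := by
      rcases hc1 with ⟨t', ht', -⟩ | ⟨ht, -⟩ | ⟨m, hm, z, hz, hd⟩ | ⟨m, hm, -⟩
      · exact absurd (Sum.inl.inj ht') (by simp)
      · exact absurd (Sum.inl.inj ht) (by simp)
      · cases Sum.inl.inj hm with | refl => exact ⟨z, by simpa [pos] using hz, hd⟩
      · exact absurd (Sum.inl.inj hm) (by simp)
    have hw2 : ∃ z, pos (σ 0) = z ∧
        G₂.Derives [Symbol.nonterminal G₂.initial] (z.map Symbol.terminal) := by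
      rcases hc2 with ⟨t', ht', -⟩ | ⟨ht, -⟩ | ⟨m, hm, -⟩ | ⟨m, hm, z, hz, hd⟩
      · exact absurd (Sum.inl.inj ht') (by simp)
      · exact absurd (Sum.inl.inj ht) (by simp)
      · exact absurd (Sum.inl.inj hm) (by simp)
      · cases Sum.inl.inj hm with | refl => exact ⟨z, by simpa [pos] using hz, hd⟩
    obtain ⟨z₁, hz₁, hd₁⟩ := hw1
    obtain ⟨z₂, hz₂, hd₂⟩ := hw2
    refine ⟨pos (σ 0), ?_, ?_⟩
    · rw [ContextFreeGrammar.mem_language_iff, hz₁]; exact hd₁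
    · rw [ContextFreeGrammar.mem_language_iff, hz₂]; exact hd₂
  · rintro ⟨w, hw1, hw2⟩ I ⟨hquads, hrules⟩
    have htyp : I.holds EncC.ctx (I.constInt EncC.a) (I.constInt EncC.typ)
        (I.constInt EncC.cls) := hquads _ rfl
    have hterm : ∀ t : T, I.satRule (termBR t) :=
      fun t => hrules _ (Or.inr (Or.inr ⟨t, rfl⟩))
    obtain ⟨d', hspan, -⟩ := word_span I hterm w (I.constInt EncC.a) htyp
    have hs1 : spanI I ([(Symbol.nonterminal G₁.initial : Symbol T G₁.NT)].map
        (symC EncC.nt1)) (I.constInt EncC.a) d' :=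
      span_of_derives I G₁ EncC.nt1
        (fun pr hpr => hrules _ (Or.inl ⟨pr, hpr, rfl⟩))
        ((ContextFreeGrammar.mem_language_iff _ _).1 hw1) hspan
    have hs2 : spanI I ([(Symbol.nonterminal G₂.initial : Symbol T G₂.NT)].map
        (symC EncC.nt2)) (I.constInt EncC.a) d' :=
      span_of_derives I G₂ EncC.nt2
        (fun pr hpr => hrules _ (Or.inr (Or.inl ⟨pr, hpr, rfl⟩)))
        ((ContextFreeGrammar.mem_language_iff _ _).1 hw2) hspan
    obtain ⟨e₁, he₁, hre₁⟩ := hs1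
    obtain ⟨e₂, he₂, hre₂⟩ := hs2
    have heq₁ : e₁ = d' := hre₁
    have heq₂ : e₂ = d' := hre₂
    rw [heq₁] at he₁
    rw [heq₂] at he₂
    refine ⟨fun _ => d', ?_⟩
    intro q hq
    simp only [cfgCQ, List.mem_cons, List.not_mem_nil, or_false] at hq
    rcases hq with rfl | rfl
    · exact he₁
    · exact he₂
end

section
/- For any quad-system QS_C = ⟨Q_C, R⟩, the distinguished quad unSafe (respectively unMSafe, respectively unCSafe) belongs to the safe dChase dChase^{safe}(QS_C) (respectively dChase^{msafe}(QS_C), dChase^{csafe}(QS_C)) if and only if QS_C is unsafe (respectively unmsafe, uncsafe). Hence the detection procedure is sound and complete. -/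
/-! ### The safety / msafety / csafety tests of the detection procedure -/

/-- `unSafeTest r μ`: the application of `μ` to `r` would create a fresh Skolem blank
node one of whose children `b` (a constant of the instantiated frontier) has a
(reflexive-transitive) descendant `b'` generated by the same bridge rule with an
isomorphic origin vector. -/
def unSafeTest {C : Type} (r : BridgeRule C) (μ : ℕ → SConst C) : Prop :=
  ∃ b b' : SConst C, b ∈ r.frontier.map μ ∧ (b' = b ∨ descOf b' b) ∧
    ∃ j w, b' = SConst.sk r.id j w ∧ VecIso w (r.frontier.map μ)

/-- `unMSafeTest r μ`: as `unSafeTest`, but only requiring the same origin rule id. -/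
def unMSafeTest {C : Type} (r : BridgeRule C) (μ : ℕ → SConst C) : Prop :=
  ∃ b b' : SConst C, b ∈ r.frontier.map μ ∧ (b' = b ∨ descOf b' b) ∧
    ∃ j w, b' = SConst.sk r.id j w

/-- The context scope of a variable in a set of quad patterns. -/
def cScope {C : Type} (v : ℕ) (l : List (QuadPattern C)) : Set C :=
  {c | ∃ q ∈ l, q.ctx = c ∧ (q.s = Term.var v ∨ q.p = Term.var v ∨ q.o = Term.var v)}

/-- `unCSafeTest QS r μ`: the application of `μ` to `r` would create, for some
existential variable `y_j` of `r`, a fresh Skolem blank node (whose origin contexts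
are `cScope y_j (head r)`) one of whose children `b` has a (reflexive-transitive)
descendant Skolem blank node `b'` with the same origin contexts. -/
def unCSafeTest {C : Type} (QS : QuadSystem C) (r : BridgeRule C)
    (μ : ℕ → SConst C) : Prop :=
  ∃ b b' : SConst C, ∃ yj ∈ r.exVars, b ∈ r.frontier.map μ ∧ (b' = b ∨ descOf b' b) ∧
    b'.isSk ∧ originContexts QS b' = cScope yj r.head

/-- The distinguished quad `unSafe` is generated in the safe dChase iff the safety
test fires for some applicable (rule, assignment) pair at some chase iteration. -/
def unsafeDetected {C : Type} (QS : QuadSystem C) : Prop :=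
  ∃ n : ℕ, ∃ r ∈ QS.rules, ∃ μ : ℕ → SConst C,
    applicable r μ (dChaseAt QS n) ∧ unSafeTest r μ

def unmsafeDetected {C : Type} (QS : QuadSystem C) : Prop :=
  ∃ n : ℕ, ∃ r ∈ QS.rules, ∃ μ : ℕ → SConst C,
    applicable r μ (dChaseAt QS n) ∧ unMSafeTest r μ

def uncsafeDetected {C : Type} (QS : QuadSystem C) : Prop :=
  ∃ n : ℕ, ∃ r ∈ QS.rules, ∃ μ : ℕ → SConst C,
    applicable r μ (dChaseAt QS n) ∧ unCSafeTest QS r μ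
/-! ### Statement: soundness and completeness of the detection procedure — the
distinguished quad `unSafe` (resp. `unMSafe`, `unCSafe`) is generated in the safe
(resp. msafe, csafe) dChase iff the quad-system is unsafe (resp. unmsafe, uncsafe). -/

/-! ### Auxiliary lemmas for the proof -/

namespace DetectAux

variable {C : Type}

/-- `v` occurs (as a variable) at some position of the quad pattern `q`. -/
def hasVar (v : ℕ) (q : QuadPattern C) : Prop :=
  q.s = Term.var v ∨ q.p = Term.var v ∨ q.o = Term.var v

lemma mem_varsOf {v : ℕ} {t : Term C} : v ∈ t.varsOf ↔ t = Term.var v := by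
  cases t <;> simp [Term.varsOf] <;> exact eq_comm

lemma mem_qvarsOf {v : ℕ} {q : QuadPattern C} : v ∈ q.varsOf ↔ hasVar v q := by
  simp [QuadPattern.varsOf, hasVar, mem_varsOf, or_assoc]

lemma mem_patsVars {v : ℕ} {l : List (QuadPattern C)} :
    v ∈ patsVars l ↔ ∃ q ∈ l, hasVar v q := by
  induction l with
  | nil => simp [patsVars]
  | cons q l ih => simp [patsVars, mem_qvarsOf] at *; rw [ih]

/-! Monotonicity of the chase. -/

lemma dChaseAt_mono {QS : QuadSystem C} {m n : ℕ} (h : m ≤ n) :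
    dChaseAt QS m ⊆ dChaseAt QS n := by
  induction n with
  | zero => cases Nat.le_zero.mp h; exact subset_rfl
  | succ n ih =>
    rcases Nat.lt_or_ge m (n + 1) with h' | h'
    · exact (ih (Nat.lt_succ_iff.mp h')).trans Set.subset_union_left
    · cases le_antisymm h h'; exact subset_rfl

lemma dChaseAt_subset_dChase {QS : QuadSystem C} (n : ℕ) :
    dChaseAt QS n ⊆ dChase QS :=
  Set.subset_iUnion (dChaseAt QS) n

lemma appearsAt_mono {QS : QuadSystem C} {b : SConst C} {m n : ℕ} (h : m ≤ n)
    (hb : appearsAt QS b m) : appearsAt QS b n := by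
  obtain ⟨q, hq, ho⟩ := hb; exact ⟨q, dChaseAt_mono h hq, ho⟩

lemma inChase_iff {QS : QuadSystem C} {b : SConst C} :
    inChase QS b ↔ ∃ n, appearsAt QS b n := by
  constructor
  · rintro ⟨q, hq, ho⟩
    obtain ⟨n, hn⟩ := Set.mem_iUnion.mp hq
    exact ⟨n, q, hn, ho⟩
  · rintro ⟨n, q, hq, ho⟩
    exact ⟨q, dChaseAt_subset_dChase n hq, ho⟩

/-! Irreflexivity of the descendant relation, via sizes. -/

lemma childOf_size {k b : SConst C} (h : childOf k b) : sizeOf k < sizeOf b := by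
  obtain ⟨i, j, w, rfl, hk⟩ := h
  have := List.sizeOf_lt_of_mem hk
  simp only [SConst.sk.sizeOf_spec]
  omega

lemma descOf_size {k b : SConst C} (h : descOf k b) : sizeOf k < sizeOf b := by
  induction h with
  | single h => exact childOf_size h
  | tail _ h ih => exact ih.trans (childOf_size h)

lemma descOf_irrefl {b : SConst C} (h : descOf b b) : False :=
  lt_irrefl _ (descOf_size h)

/-! Instantiation congruence. -/

lemma inst_congr {ν ν' : ℕ → SConst C} {q : QuadPattern C}
    (h : ∀ v, hasVar v q → ν v = ν' v) : q.inst ν = q.inst ν' := by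
  have hs : q.s.inst ν = q.s.inst ν' := by
    cases ht : q.s with
    | var v => exact h v (Or.inl ht)
    | const a => rfl
  have hp : q.p.inst ν = q.p.inst ν' := by
    cases ht : q.p with
    | var v => exact h v (Or.inr (Or.inl ht))
    | const a => rfl
  have ho : q.o.inst ν = q.o.inst ν' := by
    cases ht : q.o with
    | var v => exact h v (Or.inr (Or.inr ht))
    | const a => rfl
  simp [QuadPattern.inst, hs, hp, ho]

lemma occursIn_inst {b : SConst C} {ν : ℕ → SConst C} {q : QuadPattern C} :
    occursIn b (q.inst ν) ↔ (q.s.inst ν = b ∨ q.p.inst ν = b ∨ q.o.inst ν = b) := Iff.rfl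

/-- Values of body variables occur in the chase level where the body is satisfied. -/
lemma body_var_appears {QS : QuadSystem C} {r : BridgeRule C} {μ : ℕ → SConst C} {n : ℕ}
    (happ : applicable r μ (dChaseAt QS n)) {v : ℕ} (hv : v ∈ patsVars r.body) :
    appearsAt QS (μ v) n := by
  obtain ⟨q, hq, hvar⟩ := mem_patsVars.mp hv
  refine ⟨q.inst μ, happ.1 q hq, ?_⟩
  rcases hvar with h | h | h
  · exact Or.inl (by simp [QuadPattern.inst, h, Term.inst])
  · exact Or.inr (Or.inl (by simp [QuadPattern.inst, h, Term.inst]))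
  · exact Or.inr (Or.inr (by simp [QuadPattern.inst, h, Term.inst]))

lemma frontier_inChase {QS : QuadSystem C} (hwf : QS.WF) {r : BridgeRule C}
    (hr : r ∈ QS.rules) {μ : ℕ → SConst C} {n : ℕ}
    (happ : applicable r μ (dChaseAt QS n)) {v : ℕ} (hv : v ∈ r.frontier) :
    appearsAt QS (μ v) n :=
  body_var_appears happ ((hwf.1 r hr).2.1 v hv)

/-- Case analysis for a head term instantiating to a Skolem constant. -/
lemma term_case {QS : QuadSystem C} (hwf : QS.WF) {r' : BridgeRule C}
    (hr' : r' ∈ QS.rules) {μ' : ℕ → SConst C} {n : ℕ}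
    (happ : applicable r' μ' (dChaseAt QS n)) {h : QuadPattern C} (hh : h ∈ r'.head)
    {t : Term C} (ht : t = h.s ∨ t = h.p ∨ t = h.o)
    {i j : ℕ} {w : List (SConst C)} (he : t.inst (skExt r' μ') = SConst.sk i j w) :
    (r'.id = i ∧ j ∈ r'.exVars ∧ w = r'.frontier.map μ' ∧ hasVar j h)
      ∨ appearsAt QS (SConst.sk i j w) n := by
  cases t with
  | const a => simp [Term.inst] at he
  | var v =>
    simp only [Term.inst, skExt] at he
    by_cases hv : v ∈ r'.exVars
    · rw [if_pos hv] at he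
      obtain ⟨hi, hj, hw⟩ := SConst.sk.injEq .. ▸ he
      subst hi; subst hj
      refine Or.inl ⟨rfl, hv, hw.symm, ?_⟩
      rcases ht with h1 | h1 | h1
      · exact Or.inl h1.symm
      · exact Or.inr (Or.inl h1.symm)
      · exact Or.inr (Or.inr h1.symm)
    · rw [if_neg hv] at he
      have hvh : v ∈ patsVars r'.head := by
        refine mem_patsVars.mpr ⟨h, hh, ?_⟩
        rcases ht with h1 | h1 | h1
        · exact Or.inl h1.symm
        · exact Or.inr (Or.inl h1.symm)
        · exact Or.inr (Or.inr h1.symm)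
      have hvf : v ∈ r'.frontier := (hwf.1 r' hr').1 v hvh hv
      have hvb : v ∈ patsVars r'.body := (hwf.1 r' hr').2.1 v hvf
      exact Or.inr (he ▸ body_var_appears happ hvb)

/-- Origin lemma: any Skolem constant appearing in the chase was created by the
(rule, assignment) application recorded in its structure. -/
lemma origin {QS : QuadSystem C} (hwf : QS.WF) :
    ∀ n : ℕ, ∀ i j : ℕ, ∀ w : List (SConst C), appearsAt QS (SConst.sk i j w) n →
    ∃ r ∈ QS.rules, ∃ μ : ℕ → SConst C, ∃ m : ℕ, m < n ∧
      applicable r μ (dChaseAt QS m) ∧ r.id = i ∧ j ∈ r.exVars ∧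
      w = r.frontier.map μ ∧ ∃ h ∈ r.head, hasVar j h := by
  intro n
  induction n with
  | zero =>
    rintro i j w ⟨q, hq, ho⟩
    obtain ⟨q0, _, rfl⟩ := hq
    rcases ho with h | h | h <;> simp [Quad.toGQuad] at h
  | succ n ih =>
    rintro i j w ⟨q, hq, ho⟩
    rcases hq with hq | hq
    · obtain ⟨r, hr, μ, m, hm, rest⟩ := ih i j w ⟨q, hq, ho⟩
      exact ⟨r, hr, μ, m, hm.trans (Nat.lt_succ_self n), rest⟩
    · obtain ⟨r', hr', μ', happ, h, hh, rfl⟩ := hq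
      have key : (r'.id = i ∧ j ∈ r'.exVars ∧ w = r'.frontier.map μ' ∧ hasVar j h)
          ∨ appearsAt QS (SConst.sk i j w) n := by
        rcases ho with he | he | he
        · exact term_case hwf hr' happ hh (Or.inl rfl) he
        · exact term_case hwf hr' happ hh (Or.inr (Or.inl rfl)) he
        · exact term_case hwf hr' happ hh (Or.inr (Or.inr rfl)) he
      rcases key with ⟨hi, hj, hw, hvar⟩ | hap
      · exact ⟨r', hr', μ', n, Nat.lt_succ_self n, happ, hi, hj, hw, h, hh, hvar⟩
      · obtain ⟨r, hr, μ, m, hm, rest⟩ := ih i j w hap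
        exact ⟨r, hr, μ, m, hm.trans (Nat.lt_succ_self n), rest⟩

/-- Children of Skolem constants in the chase are in the chase. -/
lemma childOf_inChase {QS : QuadSystem C} (hwf : QS.WF) {k b : SConst C}
    (hb : inChase QS b) (h : childOf k b) : inChase QS k := by
  obtain ⟨i, j, w, rfl, hk⟩ := h
  obtain ⟨n, hn⟩ := inChase_iff.mp hb
  obtain ⟨r, hr, μ, m, _, happ, _, _, hw, _⟩ := origin hwf n i j w hn
  subst hw
  obtain ⟨v, hv, rfl⟩ := List.mem_map.mp hk
  exact inChase_iff.mpr ⟨m, frontier_inChase hwf hr happ hv⟩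

lemma descOf_inChase {QS : QuadSystem C} (hwf : QS.WF) {k b : SConst C}
    (h : descOf k b) (hb : inChase QS b) : inChase QS k := by
  induction h with
  | single h => exact childOf_inChase hwf hb h
  | tail h1 h2 ih => exact ih (childOf_inChase hwf hb h2)

/-- The freshly created Skolem constant does not appear at or before the
application level. -/
lemma not_appears_before {QS : QuadSystem C} (hwf : QS.WF) {r : BridgeRule C}
    (hr : r ∈ QS.rules) {μ : ℕ → SConst C} {n : ℕ}
    (happ : applicable r μ (dChaseAt QS n)) {j : ℕ} (hj : j ∈ r.exVars) :
    ∀ m ≤ n, ¬ appearsAt QS (SConst.sk r.id j (r.frontier.map μ)) m := by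
  have main : ¬ appearsAt QS (SConst.sk r.id j (r.frontier.map μ)) n := by
    intro hap
    obtain ⟨r₁, hr₁, μ₁, m, hm, happ₁, hid, hj₁, hw, _⟩ :=
      origin hwf n r.id j (r.frontier.map μ) hap
    obtain rfl : r = r₁ := (hwf.2.1 r₁ hr₁ r hr hid).symm
    -- the head of `r` is already satisfied at level `n`, contradiction
    refine happ.2 ⟨skExt r μ, fun v hv => by simp [skExt, if_neg hv], fun h hh => ?_⟩
    have heq : h.inst (skExt r μ) = h.inst (skExt r μ₁) := by
      refine inst_congr fun v hvar => ?_
      by_cases hv : v ∈ r.exVars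
      · simp [skExt, if_pos hv, hw]
      · have hvf : v ∈ r.frontier :=
          (hwf.1 r hr).1 v (mem_patsVars.mpr ⟨h, hh, hvar⟩) hv
        have := (List.map_eq_map_iff.mp hw.symm) v hvf
        simp [skExt, if_neg hv, this]
    rw [heq]
    have : h.inst (skExt r μ₁) ∈ dChaseAt QS (m + 1) :=
      Or.inr ⟨r, hr, μ₁, happ₁, ⟨h, hh, rfl⟩⟩
    exact dChaseAt_mono hm this
  intro m hm hap
  exact main (appearsAt_mono hm hap)

/-- The freshly created Skolem constant appears at the next level. -/
lemma appears_new {QS : QuadSystem C} {r : BridgeRule C}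
    (hr : r ∈ QS.rules) {μ : ℕ → SConst C} {n : ℕ}
    (happ : applicable r μ (dChaseAt QS n)) {j : ℕ} (hj : j ∈ r.exVars)
    {h : QuadPattern C} (hh : h ∈ r.head) (hvar : hasVar j h) :
    appearsAt QS (SConst.sk r.id j (r.frontier.map μ)) (n + 1) := by
  refine ⟨h.inst (skExt r μ), Or.inr ⟨r, hr, μ, happ, ⟨h, hh, rfl⟩⟩, ?_⟩
  rcases hvar with h1 | h1 | h1
  · exact Or.inl (by simp [QuadPattern.inst, h1, Term.inst, skExt, if_pos hj])
  · exact Or.inr (Or.inl (by simp [QuadPattern.inst, h1, Term.inst, skExt, if_pos hj]))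
  · exact Or.inr (Or.inr (by simp [QuadPattern.inst, h1, Term.inst, skExt, if_pos hj]))

/-- The origin contexts of a freshly created Skolem constant are exactly the
context scope of its existential variable in the head of its rule. -/
lemma originContexts_new {QS : QuadSystem C} (hwf : QS.WF) {r : BridgeRule C}
    (hr : r ∈ QS.rules) {μ : ℕ → SConst C} {n : ℕ}
    (happ : applicable r μ (dChaseAt QS n)) {j : ℕ} (hj : j ∈ r.exVars)
    (hhead : ∃ h ∈ r.head, hasVar j h) :
    originContexts QS (SConst.sk r.id j (r.frontier.map μ)) = cScope j r.head := by
  obtain ⟨h₀, hh₀, hvar₀⟩ := hhead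
  set β := SConst.sk r.id j (r.frontier.map μ) with hβ
  have hnew := appears_new hr happ hj hh₀ hvar₀
  have hnot := not_appears_before hwf hr happ hj
  ext c
  constructor
  · rintro ⟨N, hNmin, q, hq, hocc, hctx⟩
    -- N must be n + 1
    have hN : N = n + 1 := by
      rcases Nat.lt_trichotomy N (n + 1) with h1 | h1 | h1
      · exact absurd ⟨q, hq, hocc⟩ (hnot N (Nat.lt_succ_iff.mp h1))
      · exact h1
      · exact absurd hnew (hNmin (n + 1) h1)
    subst hN
    rcases hq with hq | hq
    · exact absurd ⟨q, hq, hocc⟩ (hnot n le_rfl)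
    · obtain ⟨r', hr', μ', happ', h, hh, rfl⟩ := hq
      have key : (r'.id = r.id ∧ j ∈ r'.exVars ∧
          r.frontier.map μ = r'.frontier.map μ' ∧ hasVar j h)
          ∨ appearsAt QS β n := by
        rcases hocc with he | he | he
        · exact term_case hwf hr' happ' hh (Or.inl rfl) he
        · exact term_case hwf hr' happ' hh (Or.inr (Or.inl rfl)) he
        · exact term_case hwf hr' happ' hh (Or.inr (Or.inr rfl)) he
      rcases key with ⟨hid, _, _, hvar⟩ | hap
      · obtain rfl : r = r' := (hwf.2.1 r' hr' r hr hid).symm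
        exact ⟨h, hh, hctx, hvar⟩
      · exact absurd hap (hnot n le_rfl)
  · rintro ⟨h, hh, hctx, hvar⟩
    refine ⟨n + 1, fun m hm => hnot m (Nat.lt_succ_iff.mp hm),
      h.inst (skExt r μ), Or.inr ⟨r, hr, μ, happ, ⟨h, hh, rfl⟩⟩, ?_, hctx⟩
    rcases hvar with h1 | h1 | h1
    · exact Or.inl (by simp [QuadPattern.inst, h1, Term.inst, skExt, if_pos hj, hβ])
    · exact Or.inr (Or.inl (by simp [QuadPattern.inst, h1, Term.inst, skExt, if_pos hj, hβ]))
    · exact Or.inr (Or.inr (by simp [QuadPattern.inst, h1, Term.inst, skExt, if_pos hj, hβ]))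

lemma originContexts_nonempty {QS : QuadSystem C} {b : SConst C}
    (hb : inChase QS b) : (originContexts QS b).Nonempty := by
  classical
  obtain ⟨n, hn⟩ := inChase_iff.mp hb
  have hex : ∃ m, appearsAt QS b m := ⟨n, hn⟩
  obtain ⟨q, hq, hocc⟩ := Nat.find_spec hex
  exact ⟨q.ctx, Nat.find hex, fun m hm => Nat.find_min hex hm, q, hq, hocc, rfl⟩

/-- Decompose a descendant relation ending at a Skolem node through one of its
children. -/
lemma descOf_decompose {b : SConst C} {i j : ℕ} {w : List (SConst C)}
    (h : descOf b (SConst.sk i j w)) :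
    ∃ c ∈ w, b = c ∨ descOf b c := by
  cases h with
  | single h =>
    obtain ⟨i', j', w', heq, hm⟩ := h
    obtain ⟨_, _, hw⟩ := SConst.sk.injEq .. ▸ heq
    exact ⟨b, hw ▸ hm, Or.inl rfl⟩
  | tail h1 h2 =>
    obtain ⟨i', j', w', heq, hm⟩ := h2
    obtain ⟨_, _, hw⟩ := SConst.sk.injEq .. ▸ heq
    exact ⟨_, hw ▸ hm, Or.inr h1⟩

end DetectAux

open DetectAux in
theorem detection_procedure_sound_and_complete {C : Type} (QS : QuadSystem C)
    (hwf : QS.WF) :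
    (unsafeDetected QS ↔ QS.Unsafe) ∧
    (unmsafeDetected QS ↔ QS.Unmsafe) ∧
    (uncsafeDetected QS ↔ QS.Uncsafe) := by
  refine ⟨⟨?_, ?_⟩, ⟨?_, ?_⟩, ⟨?_, ?_⟩⟩
  -- 1. unsafeDetected → Unsafe
  · rintro ⟨n, r, hr, μ, happ, b, b', hbmem, hdesc, j, w, rfl, hiso⟩
    obtain ⟨v, hv, rfl⟩ := List.mem_map.mp hbmem
    have hbchase : inChase QS (μ v) :=
      inChase_iff.mpr ⟨n, frontier_inChase hwf hr happ hv⟩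
    have hb' : inChase QS (SConst.sk r.id j w) := by
      rcases hdesc with heq | hd
      · exact heq ▸ hbchase
      · exact descOf_inChase hwf hd hbchase
    obtain ⟨n', hn'⟩ := inChase_iff.mp hb'
    obtain ⟨r₁, hr₁, μ₁, m, hm, happ₁, hid, hj₁, hw₁, h₁, hh₁, hvar₁⟩ :=
      origin hwf n' r.id j w hn'
    obtain rfl : r = r₁ := (hwf.2.1 r₁ hr₁ r hr hid).symm
    have hβ : inChase QS (SConst.sk r.id j (r.frontier.map μ)) :=
      inChase_iff.mpr ⟨n + 1, appears_new hr happ hj₁ hh₁ hvar₁⟩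
    have hch : childOf (μ v) (SConst.sk r.id j (r.frontier.map μ)) :=
      ⟨r.id, j, r.frontier.map μ, rfl, hbmem⟩
    have hdescβ : descOf (SConst.sk r.id j w) (SConst.sk r.id j (r.frontier.map μ)) := by
      rcases hdesc with heq | hd
      · exact heq ▸ Relation.TransGen.single hch
      · exact Relation.TransGen.tail hd hch
    exact ⟨r.id, j, w, j, r.frontier.map μ, hb', hβ,
      fun heq => descOf_irrefl (heq ▸ hdescβ), hdescβ, hiso⟩
  -- 2. Unsafe → unsafeDetected
  · rintro ⟨i, j, w, j', w', hin1, hin2, hne, hdesc, hiso⟩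
    obtain ⟨n', hn'⟩ := inChase_iff.mp hin2
    obtain ⟨r, hr, μ, m, hm, happ, hid, hj', hw', _⟩ := origin hwf n' i j' w' hn'
    subst hw'
    obtain ⟨c, hc, hbc⟩ := descOf_decompose hdesc
    exact ⟨m, r, hr, μ, happ, c, SConst.sk i j w, hc, hbc, j, w, by rw [hid], hiso⟩
  -- 3. unmsafeDetected → Unmsafe
  · rintro ⟨n, r, hr, μ, happ, b, b', hbmem, hdesc, j, w, rfl⟩
    obtain ⟨v, hv, rfl⟩ := List.mem_map.mp hbmem
    have hbchase : inChase QS (μ v) :=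
      inChase_iff.mpr ⟨n, frontier_inChase hwf hr happ hv⟩
    have hb' : inChase QS (SConst.sk r.id j w) := by
      rcases hdesc with heq | hd
      · exact heq ▸ hbchase
      · exact descOf_inChase hwf hd hbchase
    obtain ⟨n', hn'⟩ := inChase_iff.mp hb'
    obtain ⟨r₁, hr₁, μ₁, m, hm, happ₁, hid, hj₁, hw₁, h₁, hh₁, hvar₁⟩ :=
      origin hwf n' r.id j w hn'
    obtain rfl : r = r₁ := (hwf.2.1 r₁ hr₁ r hr hid).symm
    have hβ : inChase QS (SConst.sk r.id j (r.frontier.map μ)) :=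
      inChase_iff.mpr ⟨n + 1, appears_new hr happ hj₁ hh₁ hvar₁⟩
    have hch : childOf (μ v) (SConst.sk r.id j (r.frontier.map μ)) :=
      ⟨r.id, j, r.frontier.map μ, rfl, hbmem⟩
    have hdescβ : descOf (SConst.sk r.id j w) (SConst.sk r.id j (r.frontier.map μ)) := by
      rcases hdesc with heq | hd
      · exact heq ▸ Relation.TransGen.single hch
      · exact Relation.TransGen.tail hd hch
    exact ⟨r.id, j, w, j, r.frontier.map μ, hb', hβ,
      fun heq => descOf_irrefl (heq ▸ hdescβ), hdescβ⟩
  -- 4. Unmsafe → unmsafeDetected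
  · rintro ⟨i, j, w, j', w', hin1, hin2, hne, hdesc⟩
    obtain ⟨n', hn'⟩ := inChase_iff.mp hin2
    obtain ⟨r, hr, μ, m, hm, happ, hid, hj', hw', _⟩ := origin hwf n' i j' w' hn'
    subst hw'
    obtain ⟨c, hc, hbc⟩ := descOf_decompose hdesc
    exact ⟨m, r, hr, μ, happ, c, SConst.sk i j w, hc, hbc, j, w, by rw [hid]⟩
  -- 5. uncsafeDetected → Uncsafe
  · rintro ⟨n, r, hr, μ, happ, b, b', yj, hyj, hbmem, hdesc, hsk, hoc⟩
    obtain ⟨v, hv, rfl⟩ := List.mem_map.mp hbmem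
    have hbchase : inChase QS (μ v) :=
      inChase_iff.mpr ⟨n, frontier_inChase hwf hr happ hv⟩
    have hb' : inChase QS b' := by
      rcases hdesc with heq | hd
      · exact heq ▸ hbchase
      · exact descOf_inChase hwf hd hbchase
    have hcs : (cScope yj r.head).Nonempty := hoc ▸ originContexts_nonempty hb'
    obtain ⟨c, h, hh, hctx, hvar⟩ := hcs
    have hβ : inChase QS (SConst.sk r.id yj (r.frontier.map μ)) :=
      inChase_iff.mpr ⟨n + 1, appears_new hr happ hyj hh hvar⟩
    have hβoc : originContexts QS (SConst.sk r.id yj (r.frontier.map μ)) =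
        cScope yj r.head := originContexts_new hwf hr happ hyj ⟨h, hh, hvar⟩
    have hch : childOf (μ v) (SConst.sk r.id yj (r.frontier.map μ)) :=
      ⟨r.id, yj, r.frontier.map μ, rfl, hbmem⟩
    have hdescβ : descOf b' (SConst.sk r.id yj (r.frontier.map μ)) := by
      rcases hdesc with heq | hd
      · exact heq ▸ Relation.TransGen.single hch
      · exact Relation.TransGen.tail hd hch
    exact ⟨b', SConst.sk r.id yj (r.frontier.map μ), hsk, trivial,
      fun heq => descOf_irrefl (heq ▸ hdescβ), hb', hβ, hdescβ, hoc.trans hβoc.symm⟩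
  -- 6. Uncsafe → uncsafeDetected
  · rintro ⟨b, b', hbsk, hb'sk, hne, hbin, hb'in, hdesc, hoc⟩
    cases b' with
    | base a => exact hb'sk.elim
    | sk i j' w' =>
      obtain ⟨n', hn'⟩ := inChase_iff.mp hb'in
      obtain ⟨r, hr, μ, m, hm, happ, hid, hj', hw', hhd⟩ := origin hwf n' i j' w' hn'
      subst hid; subst hw'
      have hocn : originContexts QS (SConst.sk r.id j' (r.frontier.map μ)) =
          cScope j' r.head := originContexts_new hwf hr happ hj' hhd
      obtain ⟨c, hc, hbc⟩ := descOf_decompose hdesc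
      exact ⟨m, r, hr, μ, happ, c, b, j', hj', hc, hbc, hbsk, hoc.trans hocn⟩
end
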